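/- arXiv:1711.00420 — 6 statements merged into one kernel-verified Lean document; each statement's English description precedes it below -/
import Mathlib

section
/- Let b_1, ..., b_m be the bumped node sequence and x_1, ..., x_m the bumped letter sequence for the ε-insertion of a letter x into a semistandard (X,λ)-tableau T. Then for i < j: (1) x_i < x_j if ε = 0 and x_i ≤ x_j if ε = 1; (2) T(b_i) < T(b_j) if ε = 0 and T(b_i) ≤ T(b_j) if ε = 1. -/
namespace SuperRSK

variable {X Y : Type*}

/-- The super order `≺` on a superalphabet: `a ≺ b` iff (`a` odd, `b` even), or
(both even and `a < b`), or (both odd and `a > b`). Odd means parity `true`. -/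
def SuperPrec [LinearOrder X] (par : X → Bool) (a b : X) : Prop :=
  (par a = true ∧ par b = false) ∨
  (par a = false ∧ par b = false ∧ a < b) ∨
  (par a = true ∧ par b = true ∧ b < a)

/-- The `δ`-coordinate of a node: row if `δ = false`, column if `δ = true`. -/
def coord (δ : Bool) (u : ℕ × ℕ) : ℕ := if δ then u.2 else u.1

/-- A tableau is a function `ℕ × ℕ → WithTop X`, equal to `⊤` outside its diagram.
Semistandard: the support is a Young diagram and entries are non-decreasing
(both encoded by monotonicity into `WithTop X`), equal entries in a row are even,
and equal entries in a column are odd. -/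
def IsSStd [LinearOrder X] (par : X → Bool) (T : ℕ × ℕ → WithTop X) : Prop :=
  (∀ u v : ℕ × ℕ, u.1 ≤ v.1 → u.2 ≤ v.2 → T u ≤ T v) ∧
  (∀ u v : ℕ × ℕ, ∀ a : X, u.1 = v.1 → u.2 < v.2 → T u = (a : WithTop X) →
    T v = (a : WithTop X) → par a = false) ∧
  (∀ u v : ℕ × ℕ, ∀ a : X, u.2 = v.2 → u.1 < v.1 → T u = (a : WithTop X) →
    T v = (a : WithTop X) → par a = true)

/-- A standard tableau: semistandard with no repeated letters. -/
def IsStd [LinearOrder X] (par : X → Bool) (T : ℕ × ℕ → WithTop X) : Prop :=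
  IsSStd par T ∧
  ∀ u v : ℕ × ℕ, ∀ a : X, T u = (a : WithTop X) → T v = (a : WithTop X) → u = v

/-- The comparison used in `ε`-insertion: strict for `ε = false`, weak for `ε = true`. -/
def cmpIns [LinearOrder X] (ε : Bool) (x : X) (v : WithTop X) : Prop :=
  if ε then (x : WithTop X) ≤ v else (x : WithTop X) < v

/-- The comparison used in `ε`-extraction: strict for `ε = false`, weak for `ε = true`. -/
def cmpExt [LinearOrder X] (ε : Bool) (y : X) (v : WithTop X) : Prop :=
  if ε then v ≤ (y : WithTop X) else v < (y : WithTop X)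

/-- `BumpSeq ε par T x b xs m` says `b 0, …, b (m-1)` is the bumped node sequence and
`xs 0, …, xs (m-1)` the bumped letter sequence for the `ε`-insertion of `x` into `T`:
`xs 0 = x`; at step `j` the current letter `xs j` is placed at the smallest node `b j`
of the `i`-th row (if `ε + parity (xs j) = 0`) or column (if `= 1`) satisfying the
`ε`-comparison, where `i = 0` at the start and afterwards is one more than the
corresponding coordinate of the previous bumped node; the bumped letter becomes the
next inserted letter, until an empty node (`⊤`) is reached. -/
def BumpSeq [LinearOrder X] (ε : Bool) (par : X → Bool) (T : ℕ × ℕ → WithTop X)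
    (x : X) (b : ℕ → ℕ × ℕ) (xs : ℕ → X) (m : ℕ) : Prop :=
  0 < m ∧ xs 0 = x ∧
  (∀ j, j + 1 < m → T (b j) = (xs (j + 1) : WithTop X)) ∧
  T (b (m - 1)) = ⊤ ∧
  ∀ j, j < m →
    (coord (Bool.xor ε (par (xs j))) (b j) =
      (if j = 0 then 0 else coord (Bool.xor ε (par (xs j))) (b (j - 1)) + 1)) ∧
    cmpIns ε (xs j) (T (b j)) ∧
    ∀ v : ℕ × ℕ,
      coord (Bool.xor ε (par (xs j))) v = coord (Bool.xor ε (par (xs j))) (b j) →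
      cmpIns ε (xs j) (T v) →
      coord (!(Bool.xor ε (par (xs j)))) (b j) ≤ coord (!(Bool.xor ε (par (xs j)))) v

/-- `InsResult T b xs m R` says `R` is the tableau obtained from `T` by the insertion
with bumped nodes `b` and bumped letters `xs`: `R (b k) = xs k` and `R` agrees with `T`
elsewhere. -/
def InsResult [LinearOrder X] (T : ℕ × ℕ → WithTop X) (b : ℕ → ℕ × ℕ) (xs : ℕ → X)
    (m : ℕ) (R : ℕ × ℕ → WithTop X) : Prop :=
  (∀ k, k < m → R (b k) = (xs k : WithTop X)) ∧
  ∀ u : ℕ × ℕ, (∀ k, k < m → u ≠ b k) → R u = T u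

/-- `ExtractSeq ε par T u c ys m` says `c 0, …, c (m-1)` is the unbumped node sequence
and `ys 0, …, ys (m-1)` the unbumped letter sequence for the `ε`-extraction at `u`:
`c 0 = u`, `ys 0 = T u`; at each step `c (j+1)` is the greatest node, in the row/column
(according to `ε` plus the parity of `ys j`) preceding that of `c j`, whose entry is
`ε`-below `ys j`; the process stops upon reaching the first row/column. -/
def ExtractSeq [LinearOrder X] (ε : Bool) (par : X → Bool) (T : ℕ × ℕ → WithTop X)
    (u : ℕ × ℕ) (c : ℕ → ℕ × ℕ) (ys : ℕ → X) (m : ℕ) : Prop :=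
  0 < m ∧ c 0 = u ∧ T u = (ys 0 : WithTop X) ∧
  (∀ j, j + 1 < m →
    0 < coord (Bool.xor ε (par (ys j))) (c j) ∧
    coord (Bool.xor ε (par (ys j))) (c (j + 1)) + 1 =
      coord (Bool.xor ε (par (ys j))) (c j) ∧
    T (c (j + 1)) = (ys (j + 1) : WithTop X) ∧
    cmpExt ε (ys j) (T (c (j + 1))) ∧
    ∀ v : ℕ × ℕ,
      coord (Bool.xor ε (par (ys j))) v + 1 = coord (Bool.xor ε (par (ys j))) (c j) →
      cmpExt ε (ys j) (T v) →
      coord (!(Bool.xor ε (par (ys j)))) v ≤ coord (!(Bool.xor ε (par (ys j)))) (c (j + 1))) ∧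
  coord (Bool.xor ε (par (ys (m - 1)))) (c (m - 1)) = 0

/-- `ExtResult T c ys m R` says `R` is the tableau obtained from `T` by the extraction
with unbumped nodes `c` and letters `ys`: each `c k` (`k ≥ 1`) receives `ys (k-1)`, the
initial node `c 0` is emptied, and `R` agrees with `T` elsewhere. -/
def ExtResult [LinearOrder X] (T : ℕ × ℕ → WithTop X) (c : ℕ → ℕ × ℕ) (ys : ℕ → X)
    (m : ℕ) (R : ℕ × ℕ → WithTop X) : Prop :=
  (∀ k, 0 < k → k < m → R (c k) = (ys (k - 1) : WithTop X)) ∧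
  (∀ v : ℕ × ℕ, (∀ k, k < m → v ≠ c k) → R v = T v) ∧
  ((∀ k, 0 < k → k < m → c 0 ≠ c k) → R (c 0) = ⊤)

/-- Bumped letters and bumped entries are increasing along an `ε`-insertion
(strictly for `ε = 0`, weakly for `ε = 1`). -/
theorem stmt6 [LinearOrder X] (ε : Bool) (par : X → Bool) (T : ℕ × ℕ → WithTop X)
    (x : X) (b : ℕ → ℕ × ℕ) (xs : ℕ → X) (m : ℕ)
    (hT : IsSStd par T) (hb : BumpSeq ε par T x b xs m)
    (i j : ℕ) (hij : i < j) (hj : j < m) :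
    (if ε then xs i ≤ xs j else xs i < xs j) ∧
    (if ε then T (b i) ≤ T (b j) else T (b i) < T (b j)) := by
  obtain ⟨hm, hx0, hbump, htop, hstep⟩ := hb
  have key : ∀ k, k + 1 < m → (if ε then xs k ≤ xs (k + 1) else xs k < xs (k + 1)) := by
    intro k hk
    have h1 := (hstep k (by omega)).2.1
    rw [hbump k hk] at h1
    cases ε with
    | false => simpa [cmpIns, WithTop.coe_lt_coe] using h1
    | true => simpa [cmpIns, WithTop.coe_le_coe] using h1
  have chain : ∀ i j, i < j → j < m → (if ε then xs i ≤ xs j else xs i < xs j) := by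
    intro i j hij hj
    induction j with
    | zero => omega
    | succ n ih =>
      have hs := key n (by omega)
      rcases Nat.eq_or_lt_of_le (Nat.lt_succ_iff.mp hij) with h | h
      · subst h; exact hs
      · have h2 := ih h (by omega)
        cases ε with
        | false =>
          simp only [if_neg (by simp : ¬ (false = true))] at *
          exact lt_trans h2 hs
        | true =>
          simp only [if_pos rfl] at *
          exact le_trans h2 hs
  refine ⟨chain i j hij hj, ?_⟩
  have hi1 : i + 1 < m := by omega
  have hTbi : T (b i) = (xs (i + 1) : WithTop X) := hbump i hi1
  have h3 := (hstep j hj).2.1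
  have hle : i + 1 ≤ j := hij
  cases ε with
  | false =>
    simp only [cmpIns, if_neg (by simp : ¬ (false = true))] at *
    have hxle : (xs (i + 1) : WithTop X) ≤ (xs j : WithTop X) := by
      rcases Nat.eq_or_lt_of_le hle with h | h
      · rw [h]
      · have := chain (i + 1) j h hj
        have this : xs (i + 1) < xs j := this
        exact le_of_lt (WithTop.coe_lt_coe.mpr this)
    rw [hTbi]
    exact lt_of_le_of_lt hxle h3
  | true =>
    simp only [cmpIns, if_pos rfl] at *
    have hxle : (xs (i + 1) : WithTop X) ≤ (xs j : WithTop X) := by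
      rcases Nat.eq_or_lt_of_le hle with h | h
      · rw [h]
      · have := chain (i + 1) j h hj
        have this : xs (i + 1) ≤ xs j := this
        exact WithTop.coe_le_coe.mpr this
    rw [hTbi]
    exact le_trans hxle h3

end SuperRSK
end

section
/- Let b_1, ..., b_m be the bumped node sequence for the ε-insertion of a letter x into a semistandard (X,λ)-tableau T. Then for i < j, it is not the case that b_i ≥ b_j in the componentwise partial order on nodes. -/
namespace SuperRSK

variable {X Y : Type*}

/-- For `i < j`, the bumped node `b i` is not componentwise `≥ b j`. -/
theorem stmt7 [LinearOrder X] (ε : Bool) (par : X → Bool) (T : ℕ × ℕ → WithTop X)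
    (x : X) (b : ℕ → ℕ × ℕ) (xs : ℕ → X) (m : ℕ)
    (hT : IsSStd par T) (hb : BumpSeq ε par T x b xs m)
    (i j : ℕ) (hij : i < j) (hj : j < m) :
    ¬((b j).1 ≤ (b i).1 ∧ (b j).2 ≤ (b i).2) := by
  rintro ⟨h1, h2⟩
  obtain ⟨hm, hx0, hTb, hTop, hstep⟩ := hb
  have hi : i < m := lt_trans hij hj
  have hle : T (b j) ≤ T (b i) := hT.1 _ _ h1 h2
  have hTbi : T (b i) = (xs (i + 1) : WithTop X) := hTb i (by omega)
  rcases Nat.lt_or_ge (j + 1) m with hjm | hjm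
  · have hTbj : T (b j) = (xs (j + 1) : WithTop X) := hTb j hjm
    -- letters are monotone along the bump sequence
    have mono : ∀ l, l < m → ∀ k, k ≤ l → xs k ≤ xs l := by
      intro l
      induction l with
      | zero => intro _ k hk; exact le_of_eq (congrArg xs (Nat.le_zero.mp hk))
      | succ n ih =>
        intro hlm k hk
        rcases Nat.eq_or_lt_of_le hk with rfl | hk'
        · exact le_refl _
        · have hc := (hstep n (by omega)).2.1
          rw [hTb n hlm] at hc
          have hnn : xs n ≤ xs (n + 1) := by
            unfold cmpIns at hc
            cases ε
            · simp only [if_neg Bool.false_ne_true] at hc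
              exact le_of_lt (WithTop.coe_lt_coe.mp hc)
            · simp only [if_pos rfl] at hc
              exact WithTop.coe_le_coe.mp hc
          exact le_trans (ih (by omega) k (by omega)) hnn
    have hji : xs (j + 1) ≤ xs (i + 1) := by
      rw [hTbi, hTbj] at hle
      exact WithTop.coe_le_coe.mp hle
    cases hε : ε with
    | false =>
      -- strict increase at step i+1
      have hc := (hstep (i + 1) (by omega)).2.1
      rw [hTb (i + 1) (by omega)] at hc
      unfold cmpIns at hc
      rw [hε] at hc
      simp only [if_neg Bool.false_ne_true] at hc
      have hlt : xs (i + 1) < xs (i + 2) := WithTop.coe_lt_coe.mp hc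
      have : xs (i + 2) ≤ xs (j + 1) := mono (j + 1) hjm (i + 2) (by omega)
      exact absurd (lt_of_lt_of_le hlt (le_trans this hji)) (lt_irrefl _)
    | true =>
      have heq : ∀ k, i + 1 ≤ k → k ≤ j + 1 → xs k = xs (i + 1) := by
        intro k hk1 hk2
        exact le_antisymm (le_trans (mono (j + 1) hjm k hk2) hji)
          (mono k (by omega) (i + 1) hk1)
      set δ := Bool.xor true (par (xs (i + 1))) with hδ
      have hrec : ∀ d, i + 1 + d ≤ j →
          coord δ (b i) + (d + 1) ≤ coord δ (b (i + 1 + d)) := by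
        intro d
        induction d with
        | zero =>
          intro hd
          simp only [Nat.add_zero]
          have := (hstep (i + 1) (by omega)).1
          rw [heq (i + 1) le_rfl (by omega), if_neg (by omega : ¬ i + 1 = 0),
            hε] at this
          rw [← hδ] at this
          simp only [Nat.add_sub_cancel] at this
          omega
        | succ n ih =>
          intro hd
          have := (hstep (i + 1 + (n + 1)) (by omega)).1
          rw [heq (i + 1 + (n + 1)) (by omega) (by omega),
            if_neg (by omega : ¬ i + 1 + (n + 1) = 0), hε] at this
          rw [← hδ] at this
          have h' : i + 1 + (n + 1) - 1 = i + 1 + n := by omega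
          rw [h'] at this
          have := ih (by omega)
          omega
      have hj' : coord δ (b i) + (j - i) ≤ coord δ (b j) := by
        have := hrec (j - i - 1) (by omega)
        have h'' : i + 1 + (j - i - 1) = j := by omega
        rw [h''] at this
        omega
      have hcle : coord δ (b j) ≤ coord δ (b i) := by
        unfold coord
        cases δ <;> simp [h1, h2]
      omega
  · -- j = m - 1
    have hj' : j = m - 1 := by omega
    rw [hj', hTop, top_le_iff, hTbi] at hle
    exact (WithTop.coe_ne_top hle).elim

end SuperRSK
end

section
/- If T is a semistandard (X,λ)-tableau and x ∈ X, then the result (T ←ε x) of ε-inserting x into T is a semistandard (X,μ)-tableau, where [μ] = [λ] ∪ {b_m} for the final bumped node b_m, and μ is a partition of n+1 when λ ⊢ n. -/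
namespace SuperRSK

variable {X Y : Type*}

section Aux

variable [LinearOrder X] {ε : Bool} {par : X → Bool} {T : ℕ × ℕ → WithTop X}
  {x : X} {b : ℕ → ℕ × ℕ} {xs : ℕ → X} {m : ℕ} {R : ℕ × ℕ → WithTop X}

/-- The successor of a node in direction `d`. -/
def succN (d : Bool) (u : ℕ × ℕ) : ℕ × ℕ := if d then (u.1, u.2 + 1) else (u.1 + 1, u.2)

lemma coord_succN_self (d : Bool) (u : ℕ × ℕ) : coord d (succN d u) = coord d u + 1 := by
  cases d <;> simp [coord, succN]

lemma coord_succN_not (d : Bool) (u : ℕ × ℕ) : coord (!d) (succN d u) = coord (!d) u := by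
  cases d <;> simp [coord, succN]

lemma succN_fst (d : Bool) (u : ℕ × ℕ) : u.1 ≤ (succN d u).1 := by
  cases d <;> simp [succN]

lemma succN_snd (d : Bool) (u : ℕ × ℕ) : u.2 ≤ (succN d u).2 := by
  cases d <;> simp [succN]

lemma le_of_coord_le (d : Bool) {u v : ℕ × ℕ} (h1 : coord d u ≤ coord d v)
    (h2 : coord (!d) u ≤ coord (!d) v) : u.1 ≤ v.1 ∧ u.2 ≤ v.2 := by
  cases d <;> simp [coord] at h1 h2 <;> exact ⟨by omega, by omega⟩

lemma eq_of_coord_eq (d : Bool) {u v : ℕ × ℕ} (h1 : coord d u = coord d v)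
    (h2 : coord (!d) u = coord (!d) v) : u = v := by
  cases d <;> simp [coord] at h1 h2
  · exact Prod.ext h1 h2
  · exact Prod.ext h2 h1

lemma bnot_of_ne {p q : Bool} (h : p ≠ q) : p = !q := by
  cases p <;> cases q <;> simp_all

lemma xor_eq_iff {e p d : Bool} (h : Bool.xor e p = d) : p = Bool.xor e d := by
  cases e <;> cases p <;> cases d <;> simp_all

lemma cmpIns_le {y : X} {v : WithTop X} (h : cmpIns ε y v) : (y : WithTop X) ≤ v := by
  cases ε
  · exact le_of_lt (by simpa [cmpIns] using h)
  · simpa [cmpIns] using h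

lemma step_le (hb : BumpSeq ε par T x b xs m) {j : ℕ} (hj : j + 1 < m) :
    (xs j : WithTop X) ≤ xs (j + 1) := by
  have h1 := (hb.2.2.2.2 j (by omega)).2.1
  rw [hb.2.2.1 j hj] at h1
  exact cmpIns_le h1

lemma step_lt (hb : BumpSeq ε par T x b xs m) (hε : ε = false) {j : ℕ} (hj : j + 1 < m) :
    (xs j : WithTop X) < xs (j + 1) := by
  have h1 := (hb.2.2.2.2 j (by omega)).2.1
  rw [hb.2.2.1 j hj] at h1
  subst hε
  simpa [cmpIns] using h1

lemma chain_le (hb : BumpSeq ε par T x b xs m) {j k : ℕ} (hjk : j ≤ k) (hk : k < m) :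
    (xs j : WithTop X) ≤ xs k := by
  induction k with
  | zero =>
    have hj0 : j = 0 := by omega
    subst hj0; exact le_rfl
  | succ n ih =>
    rcases Nat.lt_or_ge j (n + 1) with h | h
    · exact le_trans (ih (by omega) (by omega)) (step_le hb hk)
    · have : j = n + 1 := by omega
      subst this; exact le_rfl

lemma chain_lt (hb : BumpSeq ε par T x b xs m) (hε : ε = false) {j k : ℕ}
    (hjk : j < k) (hk : k < m) : (xs j : WithTop X) < xs k := by
  induction k with
  | zero => omega
  | succ n ih =>
    rcases Nat.lt_or_ge j n with h | h
    · exact lt_trans (ih h (by omega)) (step_lt hb hε hk)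
    · have : j = n := by omega
      subst this; exact step_lt hb hε hk

lemma seg (hb : BumpSeq ε par T x b xs m) {j k l : ℕ} (hjl : j ≤ l) (hlk : l ≤ k)
    (hk : k < m) (heq : xs j = xs k) : xs l = xs j := by
  have h1 := chain_le hb hjl (by omega : l < m)
  have h2 := chain_le hb hlk hk
  rw [← heq] at h2
  exact_mod_cast le_antisymm h2 h1

lemma stepP (hT : IsSStd par T) (hb : BumpSeq ε par T x b xs m) {j : ℕ} (hj : j + 1 < m) :
    coord (Bool.xor ε (par (xs (j + 1)))) (b (j + 1)) =
      coord (Bool.xor ε (par (xs (j + 1)))) (b j) + 1 ∧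
    coord (!Bool.xor ε (par (xs (j + 1)))) (b (j + 1)) ≤
      coord (!Bool.xor ε (par (xs (j + 1)))) (b j) := by
  obtain ⟨hline, hcmp, hmin⟩ := hb.2.2.2.2 (j + 1) hj
  have hline' : coord (Bool.xor ε (par (xs (j + 1)))) (b (j + 1)) =
      coord (Bool.xor ε (par (xs (j + 1)))) (b j) + 1 := by simpa using hline
  refine ⟨hline', ?_⟩
  have hbj : T (b j) = (xs (j + 1) : WithTop X) := hb.2.2.1 j hj
  have hTle : T (b j) ≤ T (succN (Bool.xor ε (par (xs (j + 1)))) (b j)) :=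
    hT.1 _ _ (succN_fst _ _) (succN_snd _ _)
  have hcmp2 : cmpIns ε (xs (j + 1)) (T (succN (Bool.xor ε (par (xs (j + 1)))) (b j))) := by
    cases ε with
    | true =>
      simp only [cmpIns, if_true]
      exact le_trans (le_of_eq hbj.symm) hTle
    | false =>
      simp only [cmpIns, if_false]
      refine lt_of_le_of_ne (le_trans (le_of_eq hbj.symm) hTle) ?_
      intro hEq
      cases hp : par (xs (j + 1)) with
      | false =>
        rw [hp, Bool.false_xor] at hEq
        have h2 : T (succN false (b j)) = ((xs (j + 1) : X) : WithTop X) := hEq.symm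
        have := hT.2.2 (b j) (succN false (b j)) (xs (j + 1))
          (by simp [succN]) (by simp [succN]) hbj h2
        simp [hp] at this
      | true =>
        rw [hp, Bool.false_xor] at hEq
        have h2 : T (succN true (b j)) = ((xs (j + 1) : X) : WithTop X) := hEq.symm
        have := hT.2.1 (b j) (succN true (b j)) (xs (j + 1))
          (by simp [succN]) (by simp [succN]) hbj h2
        simp [hp] at this
  have := hmin (succN (Bool.xor ε (par (xs (j + 1)))) (b j))
    (by rw [coord_succN_self, hline']) hcmp2
  simpa [coord_succN_not] using this

lemma segcoord (hT : IsSStd par T) (hb : BumpSeq ε par T x b xs m) {j k : ℕ}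
    (hjk : j ≤ k) (hk : k < m) (heq : xs j = xs k) :
    coord (Bool.xor ε (par (xs j))) (b k) = coord (Bool.xor ε (par (xs j))) (b j) + (k - j) := by
  induction k with
  | zero =>
    have hj0 : j = 0 := by omega
    subst hj0; simp
  | succ n ih =>
    rcases eq_or_lt_of_le hjk with rfl | hlt
    · simp
    · have hjn : j ≤ n := by omega
      have hn : n < m := by omega
      have heqn : xs n = xs j := seg hb hjn (by omega) hk heq
      have ihn := ih hjn hn heqn.symm
      have hP := stepP hT hb (j := n) hk
      have hmode : xs (n + 1) = xs j := (seg hb (by omega : j ≤ n + 1) (le_refl (n + 1)) hk heq)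
      rw [hmode] at hP
      have h1 := hP.1
      omega

lemma coord_le_coord {u v : ℕ × ℕ} (h1 : u.1 ≤ v.1) (h2 : u.2 ≤ v.2) (d : Bool) :
    coord d u ≤ coord d v := by
  cases d <;> simpa [coord]

lemma noback (hT : IsSStd par T) (hb : BumpSeq ε par T x b xs m) {l k : ℕ}
    (hlk : l < k) (hk : k < m) (h1 : (b k).1 ≤ (b l).1) (h2 : (b k).2 ≤ (b l).2) : False := by
  have hbl : T (b l) = (xs (l + 1) : WithTop X) := hb.2.2.1 l (by omega)
  have hle : T (b k) ≤ T (b l) := hT.1 _ _ h1 h2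
  by_cases hk1 : k + 1 < m
  · have hbk : T (b k) = (xs (k + 1) : WithTop X) := hb.2.2.1 k hk1
    rw [hbk, hbl, WithTop.coe_le_coe] at hle
    have hge : (xs (l + 1) : WithTop X) ≤ xs (k + 1) := chain_le hb (by omega) hk1
    rw [WithTop.coe_le_coe] at hge
    have heq : xs (l + 1) = xs (k + 1) := le_antisymm hge hle
    cases hε : ε with
    | false =>
      have := chain_lt hb hε (show l + 1 < k + 1 by omega) hk1
      rw [heq] at this
      exact absurd this (lt_irrefl _)
    | true =>
      have hkk : xs (l + 1) = xs k :=
        (seg hb (show l + 1 ≤ k by omega) (by omega : k ≤ k + 1) hk1 heq).symm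
      have hsc := segcoord hT hb (show l + 1 ≤ k by omega) hk hkk
      have hP := stepP hT hb (j := l) (by omega)
      have hP1 := hP.1
      have hco := coord_le_coord h1 h2 (Bool.xor ε (par (xs (l + 1))))
      omega
  · have hkm : k = m - 1 := by omega
    have htop : T (b (m - 1)) = ⊤ := hb.2.2.2.1
    rw [← hkm] at htop
    rw [htop, top_le_iff, hbl] at hle
    exact WithTop.coe_ne_top hle

lemma adjacent (hT : IsSStd par T) (hb : BumpSeq ε par T x b xs m)
    (hR : InsResult T b xs m R) (d : Bool) (u : ℕ × ℕ) :
    R u ≤ R (succN d u) ∧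
      ∀ a : X, R u = (a : WithTop X) → R (succN d u) = (a : WithTop X) → par a = !d := by
  have hmono := hT.1
  have hbump := hb.2.2.1
  have hstep := hb.2.2.2.2
  have hRb := hR.1
  have hRo := hR.2
  have hTpar : ∀ (v : ℕ × ℕ) (a : X), T v = (a : WithTop X) →
      T (succN d v) = (a : WithTop X) → par a = !d := by
    intro v a h1 h2
    cases d with
    | false =>
      have := hT.2.2 v (succN false v) a (by simp [succN]) (by simp [succN]) h1 h2
      simpa using this
    | true =>
      have := hT.2.1 v (succN true v) a (by simp [succN]) (by simp [succN]) h1 h2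
      simpa using this
  by_cases hu : ∃ k, k < m ∧ u = b k
  · obtain ⟨k, hk, rfl⟩ := hu
    have hRu : R (b k) = (xs k : WithTop X) := hRb k hk
    by_cases hw : ∃ l, l < m ∧ succN d (b k) = b l
    · -- case D : both nodes on the bumping path
      obtain ⟨l, hl, hwl⟩ := hw
      have hRw : R (succN d (b k)) = (xs l : WithTop X) := by rw [hwl]; exact hRb l hl
      rcases lt_trichotomy k l with hkl | rfl | hlk
      · constructor
        · rw [hRu, hRw]
          exact chain_le hb (le_of_lt hkl) hl
        · intro a ha hwa
          have e1 : xs k = a := by exact_mod_cast hRu.symm.trans ha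
          have e2 : xs l = a := by exact_mod_cast hRw.symm.trans hwa
          cases hε : ε with
          | false =>
            have := chain_lt hb hε hkl hl
            rw [e1, e2] at this
            exact absurd this (lt_irrefl _)
          | true =>
            have hseg := segcoord hT hb (le_of_lt hkl) hl (by rw [e1, e2])
            by_cases hDd : Bool.xor ε (par (xs k)) = d
            · have hpa : par (xs k) = Bool.xor ε d := xor_eq_iff hDd
              rw [e1] at hpa
              rw [hpa, hε, Bool.true_xor]
            · have hDd' : Bool.xor ε (par (xs k)) = !d := bnot_of_ne hDd
              rw [hDd'] at hseg
              have hc2 : coord (!d) (b l) = coord (!d) (b k) := by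
                rw [← hwl, coord_succN_not]
              omega
      · have := congrArg (coord d) hwl
        rw [coord_succN_self] at this
        omega
      · exact (noback hT hb hlk hk
          (hwl ▸ succN_fst d (b k)) (hwl ▸ succN_snd d (b k))).elim
    · -- case B : u on the path, successor off the path
      push_neg at hw
      have hRw : R (succN d (b k)) = T (succN d (b k)) := hRo _ hw
      have hcmp := (hstep k hk).2.1
      have hTle : T (b k) ≤ T (succN d (b k)) :=
        hmono _ _ (succN_fst _ _) (succN_snd _ _)
      constructor
      · rw [hRu, hRw]
        exact le_trans (cmpIns_le hcmp) hTle
      · intro a ha hwa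
        have e1 : xs k = a := by exact_mod_cast hRu.symm.trans ha
        have hTw : T (succN d (b k)) = (a : WithTop X) := by rw [← hRw]; exact hwa
        cases hε : ε with
        | false =>
          rw [hε] at hcmp
          simp only [cmpIns, if_false] at hcmp
          have : (xs k : WithTop X) < (a : WithTop X) := lt_of_lt_of_le hcmp (hTw ▸ hTle)
          rw [e1] at this
          exact absurd this (lt_irrefl _)
        | true =>
          rw [hε] at hcmp
          simp only [cmpIns, if_true] at hcmp
          have hTbk : T (b k) = (a : WithTop X) := by
            refine le_antisymm (hTw ▸ hTle) ?_
            rw [← e1]; exact hcmp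
          exact hTpar (b k) a hTbk hTw
  · push_neg at hu
    have hRu : R u = T u := hRo u hu
    by_cases hw : ∃ l, l < m ∧ succN d u = b l
    · -- case C : u off the path, successor on the path
      obtain ⟨l, hl, hwl⟩ := hw
      have hRw : R (succN d u) = (xs l : WithTop X) := by rw [hwl]; exact hRb l hl
      have hc1 : coord d (b l) = coord d u + 1 := by rw [← hwl, coord_succN_self]
      have hc2 : coord (!d) (b l) = coord (!d) u := by rw [← hwl, coord_succN_not]
      obtain ⟨hline, hcmp, hmin⟩ := hstep l hl
      by_cases hdd : Bool.xor ε (par (xs l)) = d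
      · -- the step direction coincides with the adjacency direction (cross-line)
        rw [hdd] at hline hmin
        have hl0 : 0 < l := by
          rcases Nat.eq_zero_or_pos l with rfl | h
          · simp at hline; omega
          · exact h
        have el : l - 1 + 1 = l := by omega
        rw [if_neg (by omega : ¬ l = 0)] at hline
        have hcu : coord d u = coord d (b (l - 1)) := by omega
        have hP := stepP hT hb (j := l - 1) (by omega : l - 1 + 1 < m)
        rw [el] at hP
        rw [hdd] at hP
        have hcu2 : coord (!d) u ≤ coord (!d) (b (l - 1)) := by
          have := hP.2; omega
        have hcomp := le_of_coord_le d (le_of_eq hcu) hcu2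
        have hTbl : T (b (l - 1)) = (xs l : WithTop X) := by
          have := hbump (l - 1) (by omega : l - 1 + 1 < m)
          rwa [el] at this
        have hTu_le : T u ≤ (xs l : WithTop X) := by
          rw [← hTbl]; exact hmono u _ hcomp.1 hcomp.2
        cases hε : ε with
        | true =>
          constructor
          · rw [hRu, hRw]; exact hTu_le
          · intro a ha hwa
            have hxa : xs l = a := by exact_mod_cast hRw.symm.trans hwa
            rw [← hxa]
            have hpa : par (xs l) = Bool.xor ε d := xor_eq_iff hdd
            rw [hpa, hε, Bool.true_xor]
        | false =>
          have hne : u ≠ b (l - 1) := hu (l - 1) (by omega)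
          have hlt2 : coord (!d) u < coord (!d) (b (l - 1)) := by
            rcases lt_or_eq_of_le hcu2 with h | h
            · exact h
            · exact absurd (eq_of_coord_eq d hcu h) hne
          have hstrict : T u < (xs l : WithTop X) := by
            by_cases hd1 : Bool.xor ε (par (xs (l - 1))) = d
            · -- previous step in the same direction
              obtain ⟨hline1, hcmp1, hmin1⟩ := hstep (l - 1) (by omega)
              rw [hd1] at hmin1
              have hnc : ¬ cmpIns ε (xs (l - 1)) (T u) := by
                intro hc
                have := hmin1 u hcu hc
                omega
              rw [hε] at hnc
              simp [cmpIns, not_lt] at hnc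
              refine lt_of_le_of_lt hnc ?_
              have := step_lt hb hε (j := l - 1) (by omega)
              rwa [el] at this
            · -- previous step in the other direction
              have hd1' : Bool.xor ε (par (xs (l - 1))) = !d := bnot_of_ne hd1
              rcases Nat.lt_or_ge l 2 with h2 | h2
              · have e0 : l - 1 = 0 := by omega
                rw [e0] at hd1' hlt2
                obtain ⟨hline0, _, _⟩ := hstep 0 (by omega)
                rw [hd1'] at hline0
                simp at hline0
                exfalso
                omega
              · have el2 : l - 2 + 1 = l - 1 := by omega
                have hP2 := stepP hT hb (j := l - 2) (by omega : l - 2 + 1 < m)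
                rw [el2] at hP2
                rw [hd1'] at hP2
                simp only [Bool.not_not] at hP2
                have hP21 := hP2.1
                have hP22 := hP2.2
                have hcomp2 := le_of_coord_le d
                  (by omega : coord d u ≤ coord d (b (l - 2)))
                  (by omega : coord (!d) u ≤ coord (!d) (b (l - 2)))
                have hTb2 : T (b (l - 2)) = (xs (l - 1) : WithTop X) := by
                  have := hbump (l - 2) (by omega : l - 2 + 1 < m)
                  rwa [el2] at this
                have hTu2 : T u ≤ (xs (l - 1) : WithTop X) := by
                  rw [← hTb2]; exact hmono u _ hcomp2.1 hcomp2.2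
                refine lt_of_le_of_lt hTu2 ?_
                have := step_lt hb hε (j := l - 1) (by omega)
                rwa [el] at this
          constructor
          · rw [hRu, hRw]; exact le_of_lt hstrict
          · intro a ha hwa
            have h1 : T u = (a : WithTop X) := by rw [← hRu]; exact ha
            have h2 : (xs l : WithTop X) = (a : WithTop X) := hRw.symm.trans hwa
            rw [h1, h2] at hstrict
            exact absurd hstrict (lt_irrefl _)
      · -- the step direction is orthogonal to the adjacency direction (in-line)
        have hdd' : Bool.xor ε (par (xs l)) = !d := bnot_of_ne hdd
        rw [hdd'] at hmin
        simp only [Bool.not_not] at hmin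
        have hnc : ¬ cmpIns ε (xs l) (T u) := by
          intro hc
          have := hmin u (by rw [hc2]) hc
          omega
        cases hε : ε with
        | false =>
          rw [hε] at hnc
          simp [cmpIns, not_lt] at hnc
          constructor
          · rw [hRu, hRw]; exact hnc
          · intro a ha hwa
            have hxa : xs l = a := by exact_mod_cast hRw.symm.trans hwa
            rw [← hxa]
            rw [hε, Bool.false_xor] at hdd'
            exact hdd'
        | true =>
          rw [hε] at hnc
          simp only [cmpIns, if_true, not_le] at hnc
          constructor
          · rw [hRu, hRw]; exact le_of_lt hnc
          · intro a ha hwa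
            have h1 : T u = (a : WithTop X) := by rw [← hRu]; exact ha
            have h2 : (xs l : WithTop X) = (a : WithTop X) := hRw.symm.trans hwa
            rw [h1, h2] at hnc
            exact absurd hnc (lt_irrefl _)
    · -- case A : both off the path
      push_neg at hw
      have hRw : R (succN d u) = T (succN d u) := hRo _ hw
      constructor
      · rw [hRu, hRw]
        exact hmono _ _ (succN_fst _ _) (succN_snd _ _)
      · intro a ha hwa
        exact hTpar u a (by rw [← hRu]; exact ha) (by rw [← hRw]; exact hwa)

end Aux

/-- The result of `ε`-inserting a letter into a semistandard tableau is a semistandard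
tableau whose diagram is the old one together with the single new node `b (m-1)`. -/
theorem stmt8 [LinearOrder X] (ε : Bool) (par : X → Bool) (T : ℕ × ℕ → WithTop X)
    (x : X) (b : ℕ → ℕ × ℕ) (xs : ℕ → X) (m : ℕ) (R : ℕ × ℕ → WithTop X)
    (hT : IsSStd par T) (hb : BumpSeq ε par T x b xs m) (hR : InsResult T b xs m R) :
    IsSStd par R ∧ (∀ u : ℕ × ℕ, R u = ⊤ ↔ (T u = ⊤ ∧ u ≠ b (m - 1))) := by
  have hadj := adjacent hT hb hR
  have hmonoR : ∀ u v : ℕ × ℕ, u.1 ≤ v.1 → u.2 ≤ v.2 → R u ≤ R v := by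
    have hv : ∀ (i j n : ℕ), R (i, j) ≤ R (i + n, j) := by
      intro i j n
      induction n with
      | zero => simp
      | succ n ih =>
        refine le_trans ih ?_
        have := (hadj false (i + n, j)).1
        simpa [succN, add_assoc] using this
    have hh : ∀ (i j n : ℕ), R (i, j) ≤ R (i, j + n) := by
      intro i j n
      induction n with
      | zero => simp
      | succ n ih =>
        refine le_trans ih ?_
        have := (hadj true (i, j + n)).1
        simpa [succN, add_assoc] using this
    intro u v h1 h2
    obtain ⟨u1, u2⟩ := u
    obtain ⟨v1, v2⟩ := v
    simp only at h1 h2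
    rw [show v1 = u1 + (v1 - u1) by omega, show v2 = u2 + (v2 - u2) by omega]
    exact le_trans (hv u1 u2 _) (hh (u1 + (v1 - u1)) u2 _)
  constructor
  · refine ⟨hmonoR, ?_, ?_⟩
    · intro u v a h1 h2 hu hv
      have h3 : R u ≤ R (succN true u) := (hadj true u).1
      have h4 : R (succN true u) ≤ R v := by
        apply hmonoR
        · simp [succN, h1]
        · simp [succN]; omega
      have h5 : R (succN true u) = (a : WithTop X) := by
        refine le_antisymm ?_ ?_
        · rw [← hv]; exact h4
        · rw [← hu]; exact h3
      simpa using (hadj true u).2 a hu h5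
    · intro u v a h1 h2 hu hv
      have h3 : R u ≤ R (succN false u) := (hadj false u).1
      have h4 : R (succN false u) ≤ R v := by
        apply hmonoR
        · simp [succN]; omega
        · simp [succN, h1]
      have h5 : R (succN false u) = (a : WithTop X) := by
        refine le_antisymm ?_ ?_
        · rw [← hv]; exact h4
        · rw [← hu]; exact h3
      simpa using (hadj false u).2 a hu h5
  · intro u
    constructor
    · intro hu
      have hoff : ∀ k, k < m → u ≠ b k := by
        intro k hk he
        have h1 := hR.1 k hk
        rw [← he, hu] at h1
        exact WithTop.coe_ne_top h1.symm
      refine ⟨?_, hoff (m - 1) (by have := hb.1; omega)⟩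
      rw [← hR.2 u hoff]; exact hu
    · rintro ⟨h1, h2⟩
      have hoff : ∀ k, k < m → u ≠ b k := by
        intro k hk he
        rcases Nat.lt_or_ge (k + 1) m with h3 | h3
        · have h4 := hb.2.2.1 k h3
          rw [← he, h1] at h4
          exact WithTop.coe_ne_top h4.symm
        · have hk1 : k = m - 1 := by omega
          exact h2 (by rw [← hk1]; exact he)
      rw [hR.2 u hoff]; exact h1

end SuperRSK
end

section
/- If T is a semistandard (X,λ)-tableau and u is a removable node of [λ], then the result (T →ε u) of ε-extraction at u is a semistandard tableau of shape λ \ {u}. -/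
namespace SuperRSK

variable {X Y : Type*}

section Aux

variable [LinearOrder X] {ε : Bool} {par : X → Bool} {T : ℕ × ℕ → WithTop X}
  {u : ℕ × ℕ} {c : ℕ → ℕ × ℕ} {ys : ℕ → X} {m : ℕ} {R : ℕ × ℕ → WithTop X}

theorem coord_false (p : ℕ × ℕ) : coord false p = p.1 := rfl

theorem coord_true (p : ℕ × ℕ) : coord true p = p.2 := rfl

theorem cmpExt_le {y : X} {v : WithTop X} (h : cmpExt ε y v) : v ≤ (y : WithTop X) := by
  cases ε
  · exact le_of_lt h
  · exact h

theorem cmpExt_of {y : X} {v : WithTop X} (h : v ≤ (y : WithTop X))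
    (h' : v = (y : WithTop X) → ε = true) : cmpExt ε y v := by
  cases ε
  · exact lt_of_le_of_ne h (fun hh => by simpa using h' hh)
  · exact h

/-- entries along the extraction path -/
theorem ext_entry (hc : ExtractSeq ε par T u c ys m) :
    ∀ j, j < m → T (c j) = (ys j : WithTop X) := by
  intro j hj
  cases j with
  | zero => rw [hc.2.1]; exact hc.2.2.1
  | succ j => exact (hc.2.2.2.1 j hj).2.2.1

/-- the unbumped letters are weakly decreasing -/
theorem ext_anti (hc : ExtractSeq ε par T u c ys m) :
    ∀ j k, j ≤ k → k < m → ys k ≤ ys j := by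
  intro j k hjk hk
  induction k with
  | zero => interval_cases j; exact le_rfl
  | succ k ih =>
    rcases Nat.eq_or_lt_of_le hjk with h | h
    · exact h ▸ le_rfl
    · have h1 : ys (k + 1) ≤ ys k := by
        have := cmpExt_le (hc.2.2.2.1 k hk).2.2.2.1
        rw [(hc.2.2.2.1 k hk).2.2.1] at this
        exact_mod_cast this
      exact h1.trans (ih (Nat.lt_succ_iff.mp h) (Nat.lt_of_succ_lt hk))

/-- on a block of constant letters the tracked coordinate drops by one each step -/
theorem ext_drop (hc : ExtractSeq ε par T u c ys m) {x : X} {j k : ℕ}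
    (hjk : j ≤ k) (hk : k < m) (hx : ∀ i, j ≤ i → i < k → ys i = x) :
    coord (Bool.xor ε (par x)) (c k) + (k - j) = coord (Bool.xor ε (par x)) (c j) := by
  induction k with
  | zero => interval_cases j; simp
  | succ k ih =>
    rcases Nat.eq_or_lt_of_le hjk with h | h
    · simp [h]
    · have hj' : j ≤ k := Nat.lt_succ_iff.mp h
      have hstep := (hc.2.2.2.1 k hk).2.1
      have hyk : ys k = x := hx k hj' (Nat.lt_succ_self k)
      rw [hyk] at hstep
      have := ih hj' (Nat.lt_of_succ_lt hk) (fun i h1 h2 => hx i h1 (h2.trans (Nat.lt_succ_self k)))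
      omega

/-- nodes along the extraction path are pairwise distinct -/
theorem ext_distinct (hc : ExtractSeq ε par T u c ys m) :
    ∀ j k, j < k → k < m → c j ≠ c k := by
  intro j k hjk hk heq
  have hTjk : T (c j) = T (c k) := by rw [heq]
  rw [ext_entry hc j (hjk.trans hk), ext_entry hc k hk] at hTjk
  have hys : ys j = ys k := by exact_mod_cast hTjk
  have hx : ∀ i, j ≤ i → i < k → ys i = ys j :=
    fun i h1 h2 => le_antisymm (ext_anti hc j i h1 (h2.trans hk))
      (hys ▸ ext_anti hc i k (le_of_lt h2) hk)
  have := ext_drop hc (le_of_lt hjk) hk hx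
  rw [heq] at this
  omega

/-- the non-tracked coordinate weakly increases at each step -/
theorem ext_other (hT : IsSStd par T) (hc : ExtractSeq ε par T u c ys m) :
    ∀ j, j + 1 < m → coord (!(Bool.xor ε (par (ys j)))) (c j) ≤
      coord (!(Bool.xor ε (par (ys j)))) (c (j + 1)) := by
  intro j hj
  obtain ⟨hpos, hdrop, hTj1, hcmp, hmax⟩ := hc.2.2.2.1 j hj
  have hTcj := ext_entry hc j (Nat.lt_of_succ_lt hj)
  cases hδ : Bool.xor ε (par (ys j)) with
  | false =>
    rw [hδ] at hpos hdrop hmax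
    simp only [coord_false] at hpos hdrop
    set w0 : ℕ × ℕ := ((c j).1 - 1, (c j).2) with hw0
    have hle : T w0 ≤ T (c j) := hT.1 _ _ (by simp [hw0]) le_rfl
    have hcmp0 : cmpExt ε (ys j) (T w0) := by
      refine cmpExt_of (hle.trans_eq hTcj) (fun heq => ?_)
      have hp : par (ys j) = true :=
        hT.2.2 w0 (c j) (ys j) rfl (by simp [hw0]; omega) heq hTcj
      rw [hp] at hδ
      revert hδ; cases ε <;> simp
    have := hmax w0 (by simp [coord, hw0]; omega) hcmp0
    exact this
  | true =>
    rw [hδ] at hpos hdrop hmax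
    simp only [coord_true] at hpos hdrop
    set w0 : ℕ × ℕ := ((c j).1, (c j).2 - 1) with hw0
    have hle : T w0 ≤ T (c j) := hT.1 _ _ le_rfl (by simp [hw0])
    have hcmp0 : cmpExt ε (ys j) (T w0) := by
      refine cmpExt_of (hle.trans_eq hTcj) (fun heq => ?_)
      have hp : par (ys j) = false :=
        hT.2.1 w0 (c j) (ys j) rfl (by simp [hw0]; omega) heq hTcj
      rw [hp] at hδ
      revert hδ; cases ε <;> simp
    have := hmax w0 (by simp [coord, hw0]; omega) hcmp0
    exact this

theorem ext_R0 (hc : ExtractSeq ε par T u c ys m) (hR : ExtResult T c ys m R) :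
    R (c 0) = ⊤ :=
  hR.2.2 (fun k hk hkm => ext_distinct hc 0 k hk hkm)

theorem ext_Rk (hR : ExtResult T c ys m R) :
    ∀ k, 0 < k → k < m → R (c k) = (ys (k - 1) : WithTop X) := hR.1

theorem ext_Roff (hR : ExtResult T c ys m R) {v : ℕ × ℕ}
    (hv : ∀ k, k < m → v ≠ c k) : R v = T v := hR.2.1 v hv

/-- transposition of nodes -/
def sw (p : ℕ × ℕ) : ℕ × ℕ := (p.2, p.1)

theorem coord_sw (δ : Bool) (p : ℕ × ℕ) : coord δ (sw p) = coord (!δ) p := by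
  cases δ <;> rfl

theorem sw_inj {p q : ℕ × ℕ} (h : sw p = sw q) : p = q := by
  cases p; cases q; simp [sw] at h; simp [h]

theorem xor_not (ε b : Bool) : Bool.xor ε (!b) = !(Bool.xor ε b) := by
  cases ε <;> cases b <;> rfl

theorem IsSStd.sw (hT : IsSStd par T) : IsSStd (fun x => !par x) (fun p => T (SuperRSK.sw p)) := by
  refine ⟨fun a b h1 h2 => hT.1 _ _ h2 h1, ?_, ?_⟩
  · intro a b x h1 h2 ha hb
    simp [hT.2.2 (SuperRSK.sw a) (SuperRSK.sw b) x h1 h2 ha hb]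
  · intro a b x h1 h2 ha hb
    simp [hT.2.1 (SuperRSK.sw a) (SuperRSK.sw b) x h1 h2 ha hb]

theorem ExtractSeq.sw (hc : ExtractSeq ε par T u c ys m) :
    ExtractSeq ε (fun x => !par x) (fun p => T (SuperRSK.sw p)) (SuperRSK.sw u)
      (fun j => SuperRSK.sw (c j)) ys m := by
  obtain ⟨hm, hc0, hy0, hstep, hlast⟩ := hc
  refine ⟨hm, by simp only []; rw [hc0], hy0, ?_, ?_⟩
  · intro j hj
    obtain ⟨hpos, hdrop, hTj1, hcmp, hmax⟩ := hstep j hj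
    refine ⟨?_, ?_, hTj1, hcmp, ?_⟩
    · simpa only [coord_sw, xor_not, Bool.not_not]
    · simpa only [coord_sw, xor_not, Bool.not_not]
    · intro v hv1 hv2
      have := hmax (SuperRSK.sw v) ?_ ?_
      · simpa only [coord_sw, xor_not, Bool.not_not] using this
      · simpa only [coord_sw, xor_not, Bool.not_not] using hv1
      · simpa using hv2
  · simpa only [coord_sw, xor_not, Bool.not_not] using hlast

theorem ExtResult.sw (hR : ExtResult T c ys m R) :
    ExtResult (fun p => T (SuperRSK.sw p)) (fun j => SuperRSK.sw (c j)) ys m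
      (fun p => R (SuperRSK.sw p)) := by
  refine ⟨fun k h1 h2 => hR.1 k h1 h2, ?_, ?_⟩
  · intro v hv
    exact hR.2.1 (SuperRSK.sw v) (fun k hk h => hv k hk (by simp only []; rw [← h]; rfl))
  · intro h
    exact hR.2.2 (fun k h1 h2 heq => h k h1 h2 (by simp only []; rw [heq]))

/-- Key local lemma: comparison of `R` at a node and its right neighbour. -/
theorem key_row (hT : IsSStd par T)
    (hu1 : T (u.1 + 1, u.2) = ⊤) (hu2 : T (u.1, u.2 + 1) = ⊤)
    (hc : ExtractSeq ε par T u c ys m) (hR : ExtResult T c ys m R)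
    (v w : ℕ × ℕ) (hw1 : w.1 = v.1) (hw2 : w.2 = v.2 + 1) :
    R v ≤ R w ∧ ∀ x : X, R v = (x : WithTop X) → R w = (x : WithTop X) → par x = false := by
  by_cases hv : ∃ k, k < m ∧ v = c k
  · obtain ⟨k, hk, rfl⟩ := hv
    cases k with
    | zero =>
      -- `v = c 0 = u` is the emptied node; its right neighbour is empty as well
      have hr0 : R (c 0) = ⊤ := ext_R0 hc hR
      have hTw : T w = ⊤ := by
        have hwu : w = (u.1, u.2 + 1) := by
          have h0 := hc.2.1
          refine Prod.ext ?_ ?_ <;> simp [hw1, hw2, ← h0]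
        rw [hwu]; exact hu2
      have hwoff : ∀ l, l < m → w ≠ c l := by
        intro l hl h
        rw [h, ext_entry hc l hl] at hTw
        exact WithTop.coe_ne_top hTw
      have hrw : R w = ⊤ := by rw [ext_Roff hR hwoff]; exact hTw
      constructor
      · rw [hr0, hrw]
      · intro x hx _; rw [hr0] at hx; exact absurd hx.symm WithTop.coe_ne_top
    | succ k =>
      have hRv : R (c (k + 1)) = (ys k : WithTop X) := by
        simpa using ext_Rk hR (k + 1) (Nat.succ_pos k) hk
      obtain ⟨hpos, hdrop, hTk1, hcmp, hmax⟩ := hc.2.2.2.1 k hk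
      by_cases hwp : ∃ l, l < m ∧ w = c l
      · -- both nodes lie on the extraction path
        obtain ⟨l, hl, rfl⟩ := hwp
        -- first, `l ≤ k`
        have hlk : l ≤ k := by
          by_contra hlt
          push_neg at hlt
          rcases Nat.lt_or_ge l (k + 2) with h | h
          · have hl1 : l = k + 1 := by omega
            rw [hl1] at hw2; omega
          · have h1 : T (c (k + 1)) ≤ T (c l) := hT.1 _ _ (le_of_eq hw1.symm) (by omega)
            rw [ext_entry hc (k + 1) (by omega), ext_entry hc l hl] at h1
            have h1' : ys (k + 1) ≤ ys l := by exact_mod_cast h1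
            have h2 : ys l ≤ ys (k + 1) := ext_anti hc (k + 1) l (by omega) hl
            have heq : ys l = ys (k + 1) := le_antisymm h2 h1'
            have hx : ∀ i, k + 1 ≤ i → i < l → ys i = ys (k + 1) := by
              intro i hi1 hi2
              exact le_antisymm (ext_anti hc (k + 1) i hi1 (hi2.trans hl))
                (heq ▸ ext_anti hc i l (le_of_lt hi2) hl)
            have hdrop2 := ext_drop hc (show k + 1 ≤ l by omega) hl hx
            cases hb : Bool.xor ε (par (ys (k + 1))) <;>
              rw [hb] at hdrop2 <;> simp only [coord_false, coord_true] at hdrop2 <;> omega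
        cases l with
        | zero =>
          have hrw : R (c 0) = ⊤ := ext_R0 hc hR
          exact ⟨hrw ▸ le_top, fun x _ hx => absurd (hrw ▸ hx).symm WithTop.coe_ne_top⟩
        | succ l =>
          have hRw : R (c (l + 1)) = (ys l : WithTop X) := by
            simpa using ext_Rk hR (l + 1) (Nat.succ_pos l) hl
          have hlek : ys k ≤ ys l := ext_anti hc l k (by omega) (by omega)
          refine ⟨?_, ?_⟩
          · rw [hRv, hRw]; exact_mod_cast hlek
          · intro x hx hx'
            rw [hRv] at hx; rw [hRw] at hx'
            have hxk : ys k = x := by exact_mod_cast hx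
            have hxl : ys l = x := by exact_mod_cast hx'
            have hxall : ∀ i, l + 1 ≤ i → i < k + 1 → ys i = x := by
              intro i hi1 hi2
              refine le_antisymm (hxl ▸ ext_anti hc l i (by omega) (by omega))
                (hxk ▸ ext_anti hc i k (by omega) (by omega))
            have hdrop2 := ext_drop hc (by omega : l + 1 ≤ k + 1) hk hxall
            cases hb : Bool.xor ε (par x) <;>
              rw [hb] at hdrop2 <;> simp only [coord_false, coord_true] at hdrop2
            · omega
            · -- column direction: forces `k = l + 1` and `ε = true`
              have hkl : k = l + 1 := by omega
              have hcmp' := (hc.2.2.2.1 l (by omega)).2.2.2.1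
              rw [ext_entry hc (l + 1) (by omega)] at hcmp'
              have hyll : ys (l + 1) = x := hxall (l + 1) le_rfl (by omega)
              rw [hyll, ← hxl] at hcmp'
              have hε : ε = true := by
                cases ε
                · exact absurd hcmp' (lt_irrefl _)
                · rfl
              rw [hε] at hb
              simpa using hb
      · -- `w` is off the path
        have hwoff : ∀ l, l < m → w ≠ c l := fun l hl h => hwp ⟨l, hl, h⟩
        have hRw : R w = T w := ext_Roff hR hwoff
        cases hδ : Bool.xor ε (par (ys k)) with
        | false =>
          rw [hδ] at hdrop hmax
          simp only [coord_false] at hdrop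
          have hncmp : ¬ cmpExt ε (ys k) (T w) := by
            intro hcw
            have := hmax w (by simp only [coord_false]; omega) hcw
            simp only [coord_true, Bool.not_false] at this
            omega
          constructor
          · rw [hRv, hRw]
            cases ε
            · exact not_lt.mp hncmp
            · exact le_of_lt (not_le.mp hncmp)
          · intro x hx hx'
            rw [hRv] at hx; rw [hRw] at hx'
            have hxk : ys k = x := by exact_mod_cast hx
            have hε : ε = false := by
              cases ε
              · rfl
              · exact absurd (le_of_eq (hx'.trans (by rw [hxk]))) hncmp
            rw [hε] at hδ
            rw [← hxk]
            simpa using hδ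
        | true =>
          rw [hδ] at hdrop
          simp only [coord_true] at hdrop
          have hoth := ext_other hT hc k hk
          rw [hδ] at hoth
          simp only [coord_false, Bool.not_true] at hoth
          have hcol : (c k).2 = w.2 := by omega
          have hle : (ys k : WithTop X) ≤ T w := by
            rw [← ext_entry hc k (by omega)]
            exact hT.1 _ _ (by omega) (le_of_eq hcol)
          refine ⟨?_, ?_⟩
          · rw [hRv, hRw]; exact hle
          · intro x hx hx'
            exfalso
            rw [hRv] at hx; rw [hRw] at hx'
            have hxk : ys k = x := by exact_mod_cast hx
            have hne : c k ≠ w := fun h => hwoff k (by omega) h.symm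
            have hlt1 : (c k).1 < w.1 := by
              rcases Nat.eq_or_lt_of_le (by omega : (c k).1 ≤ w.1) with h | h
              · exact absurd (Prod.ext h hcol) hne
              · exact h
            cases k with
            | zero =>
              have h0 := hc.2.1
              have : T (u.1 + 1, u.2) ≤ T w := by
                refine hT.1 _ _ ?_ ?_ <;> simp [← h0] <;> omega
              rw [hu1, hx'] at this
              exact absurd (top_le_iff.mp this) WithTop.coe_ne_top
            | succ k' =>
              obtain ⟨hpos', hdrop', hTk', hcmp', hmax'⟩ := hc.2.2.2.1 k' (by omega)
              have hTck : T (c (k' + 1)) = (x : WithTop X) := by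
                rw [ext_entry hc (k' + 1) (by omega), hxk]
              have hpar : par x = true := hT.2.2 (c (k' + 1)) w x hcol hlt1 hTck hx'
              have hε : ε = false := by
                rw [hxk, hpar] at hδ
                cases ε
                · rfl
                · simpa using hδ
              have hxz : (x : WithTop X) < (ys k' : WithTop X) := by
                rw [hε] at hcmp'
                rw [hTck] at hcmp'
                exact hcmp'
              cases hδ' : Bool.xor ε (par (ys k')) with
              | true =>
                rw [hδ'] at hdrop' hmax'
                simp only [coord_true] at hdrop'
                have := hmax' w (by simp only [coord_true]; omega)
                  (by rw [hε]; show T w < _; rw [hx']; exact hxz)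
                simp only [coord_false, Bool.not_true] at this
                omega
              | false =>
                rw [hδ'] at hdrop'
                simp only [coord_false] at hdrop'
                have hoth' := ext_other hT hc k' (by omega)
                rw [hδ'] at hoth'
                simp only [coord_true, Bool.not_false] at hoth'
                set p : ℕ × ℕ := ((c (k' + 1)).1 + 1, w.2) with hp
                have hTp1 : T (c (k' + 1)) ≤ T p := hT.1 _ _ (by simp [hp]) (by simp [hp]; omega)
                have hTp2 : T p ≤ T w := hT.1 _ _ (by simp [hp]; omega) (by simp [hp])
                have hTp : T p = (x : WithTop X) :=
                  le_antisymm (hTp2.trans_eq hx') (hTck ▸ hTp1)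
                have hzp : T (c k') ≤ T p := by
                  refine hT.1 _ _ (by simp [hp]; omega) ?_
                  simp only [hp]
                  omega
                rw [ext_entry hc k' (by omega), hTp] at hzp
                exact absurd hzp (not_le.mpr hxz)
  · by_cases hwp : ∃ l, l < m ∧ w = c l
    · obtain ⟨l, hl, rfl⟩ := hwp
      have hRv : R v = T v := ext_Roff hR (fun k hk h => hv ⟨k, hk, h⟩)
      cases l with
      | zero =>
        have hrw : R (c 0) = ⊤ := ext_R0 hc hR
        exact ⟨hrw ▸ le_top, fun x _ hx => absurd (hrw ▸ hx).symm WithTop.coe_ne_top⟩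
      | succ l =>
        have hRw : R (c (l + 1)) = (ys l : WithTop X) := by
          simpa using ext_Rk hR (l + 1) (Nat.succ_pos l) hl
        have h1 : T v ≤ T (c (l + 1)) := hT.1 _ _ (le_of_eq hw1.symm) (by omega)
        have h2 : (ys (l + 1) : WithTop X) ≤ (ys l : WithTop X) := by
          exact_mod_cast ext_anti hc l (l + 1) (Nat.le_succ l) hl
        refine ⟨?_, ?_⟩
        · rw [hRv, hRw]
          exact (h1.trans_eq (ext_entry hc (l + 1) hl)).trans h2
        · intro x hx hx'
          rw [hRv] at hx; rw [hRw] at hx'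
          have hTw : T (c (l + 1)) = (x : WithTop X) := by
            refine le_antisymm ?_ ?_
            · rw [ext_entry hc (l + 1) hl, ← hx']; exact h2
            · rw [← hx]; exact h1
          exact hT.2.1 v (c (l + 1)) x hw1.symm (by omega) hx hTw
    · have hRv : R v = T v := ext_Roff hR (fun k hk h => hv ⟨k, hk, h⟩)
      have hRw : R w = T w := ext_Roff hR (fun k hk h => hwp ⟨k, hk, h⟩)
      refine ⟨?_, ?_⟩
      · rw [hRv, hRw]; exact hT.1 v w (le_of_eq hw1.symm) (by omega)
      · intro x hx hx'
        exact hT.2.1 v w x hw1.symm (by omega) (by rw [← hRv]; exact hx)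
          (by rw [← hRw]; exact hx')

/-- Key local lemma: comparison of `R` at a node and the node below it. -/
theorem key_col (hT : IsSStd par T)
    (hu1 : T (u.1 + 1, u.2) = ⊤) (hu2 : T (u.1, u.2 + 1) = ⊤)
    (hc : ExtractSeq ε par T u c ys m) (hR : ExtResult T c ys m R)
    (v w : ℕ × ℕ) (hw1 : w.2 = v.2) (hw2 : w.1 = v.1 + 1) :
    R v ≤ R w ∧ ∀ x : X, R v = (x : WithTop X) → R w = (x : WithTop X) → par x = true := by
  have h := key_row hT.sw
    (show (fun p => T (SuperRSK.sw p)) ((SuperRSK.sw u).1 + 1, (SuperRSK.sw u).2) = ⊤ from hu2)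
    (show (fun p => T (SuperRSK.sw p)) ((SuperRSK.sw u).1, (SuperRSK.sw u).2 + 1) = ⊤ from hu1)
    hc.sw hR.sw (SuperRSK.sw v) (SuperRSK.sw w) hw1 hw2
  exact ⟨h.1, fun x hx hx' => by simpa using h.2 x hx hx'⟩

end Aux

/-- The result of `ε`-extraction at a removable node of a semistandard tableau is
semistandard. A node `u` of the diagram is removable when the nodes directly below and
directly to the right of it are empty. -/
theorem stmt9 [LinearOrder X] (ε : Bool) (par : X → Bool) (T : ℕ × ℕ → WithTop X)
    (u : ℕ × ℕ) (c : ℕ → ℕ × ℕ) (ys : ℕ → X) (m : ℕ) (R : ℕ × ℕ → WithTop X)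
    (hT : IsSStd par T) (hu : T u ≠ ⊤)
    (hu1 : T (u.1 + 1, u.2) = ⊤) (hu2 : T (u.1, u.2 + 1) = ⊤)
    (hc : ExtractSeq ε par T u c ys m) (hR : ExtResult T c ys m R) :
    IsSStd par R := by
  have hrow := key_row hT hu1 hu2 hc hR
  have hcol := key_col hT hu1 hu2 hc hR
  have mono : ∀ n (a b : ℕ × ℕ), a.1 ≤ b.1 → a.2 ≤ b.2 → b.1 + b.2 ≤ a.1 + a.2 + n →
      R a ≤ R b := by
    intro n
    induction n with
    | zero =>
      intro a b h1 h2 h3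
      have hab : a = b := Prod.ext (by omega) (by omega)
      rw [hab]
    | succ n ih =>
      intro a b h1 h2 h3
      rcases Nat.lt_or_ge a.1 b.1 with h | h
      · have step := (hcol (b.1 - 1, b.2) b rfl (by omega)).1
        exact (ih a (b.1 - 1, b.2) (by omega) (by omega) (by omega)).trans step
      · rcases Nat.lt_or_ge a.2 b.2 with h' | h'
        · have step := (hrow (b.1, b.2 - 1) b rfl (by omega)).1
          exact (ih a (b.1, b.2 - 1) (by omega) (by omega) (by omega)).trans step
        · have hab : a = b := Prod.ext (by omega) (by omega)
          rw [hab]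
  refine ⟨?_, ?_, ?_⟩
  · intro a b h1 h2
    exact mono (b.1 + b.2) a b h1 h2 (by omega)
  · intro a b x h1 h2 ha hb
    have hstep := hrow a (a.1, a.2 + 1) rfl rfl
    have h3 : R (a.1, a.2 + 1) = (x : WithTop X) := by
      refine le_antisymm ?_ ?_
      · rw [← hb]
        exact mono (b.1 + b.2) (a.1, a.2 + 1) b (by omega) (by omega) (by omega)
      · rw [← ha]; exact hstep.1
    exact hstep.2 x ha h3
  · intro a b x h1 h2 ha hb
    have hstep := hcol a (a.1 + 1, a.2) rfl rfl
    have h3 : R (a.1 + 1, a.2) = (x : WithTop X) := by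
      refine le_antisymm ?_ ?_
      · rw [← hb]
        exact mono (b.1 + b.2) (a.1 + 1, a.2) b (by omega) (by omega) (by omega)
      · rw [← ha]; exact hstep.1
    exact hstep.2 x ha h3

end SuperRSK
end

section
/- For a standard (X,λ)-tableau T and a letter x ∈ X not occurring in T: (1) the conjugate of the insertion equals the (ε+1)-insertion into the conjugate, i.e., (T ←ε x)' = (T' ←(ε+1) x), and the bumped node sequence of the latter is the transpose of that of the former; (2) the dual of the insertion equals the (ε+1)-insertion of x* into T*, i.e., (T ←ε x)* = (T* ←(ε+1) x*), and both share the same bumped node sequence. -/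
namespace SuperRSK

variable {X Y : Type*}

lemma coord_swap (δ : Bool) (u : ℕ × ℕ) : coord δ (u.2, u.1) = coord (!δ) u := by
  cases δ <;> rfl

lemma coord_not (δ : Bool) (u : ℕ × ℕ) : coord (!δ) u = coord δ (u.2, u.1) := by
  cases δ <;> rfl

lemma xor_not_left (ε p : Bool) : Bool.xor (!ε) p = !(Bool.xor ε p) := by
  cases ε <;> cases p <;> rfl

lemma xor_not_not (ε p : Bool) : Bool.xor (!ε) (!p) = Bool.xor ε p := by
  cases ε <;> cases p <;> rfl

lemma cmpIns_not_iff [LinearOrder X] {ε : Bool} {x : X} {v : WithTop X}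
    (h : v ≠ (x : WithTop X)) : cmpIns (!ε) x v ↔ cmpIns ε x v := by
  have h2 : (x : WithTop X) ≤ v ↔ (x : WithTop X) < v :=
    ⟨fun h' => lt_of_le_of_ne h' (Ne.symm h), le_of_lt⟩
  cases ε <;> simp [cmpIns, h2]

/-- For a standard tableau `T` and a letter `x` not occurring in `T`:
(1) conjugating (transposing) turns `ε`-insertion into `(ε+1)`-insertion, with the
bumped node sequence transposed, and the resulting tableaux are conjugate;
(2) dualizing (flipping all parities; the dual order agrees with the original) turns
`ε`-insertion into `(ε+1)`-insertion with the same bumped node sequence. -/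
theorem stmt11 [LinearOrder X] (ε : Bool) (par : X → Bool) (T : ℕ × ℕ → WithTop X)
    (x : X) (b : ℕ → ℕ × ℕ) (xs : ℕ → X) (m : ℕ)
    (hT : IsStd par T) (hx : ∀ u : ℕ × ℕ, T u ≠ (x : WithTop X))
    (hb : BumpSeq ε par T x b xs m) :
    (BumpSeq (!ε) par (fun u => T (u.2, u.1)) x (fun j => ((b j).2, (b j).1)) xs m ∧
      ∀ R : ℕ × ℕ → WithTop X, InsResult T b xs m R →
        InsResult (fun u => T (u.2, u.1)) (fun j => ((b j).2, (b j).1)) xs m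
          (fun u => R (u.2, u.1))) ∧
    BumpSeq (!ε) (fun a => !par a) T x b xs m := by
  obtain ⟨hbm, hx0, hbT, hbtop, hstep⟩ := hb
  -- Key fact: `T v ≠ xs j` for any `v` in the row/column being scanned at step `j`.
  have key : ∀ j, j < m → ∀ v : ℕ × ℕ,
      coord (Bool.xor ε (par (xs j))) v = coord (Bool.xor ε (par (xs j))) (b j) →
      T v ≠ (xs j : WithTop X) := by
    intro j hj v hv hTv
    cases j with
    | zero => exact hx v (hx0 ▸ hTv)
    | succ i =>
      have hTbi : T (b i) = (xs (i + 1) : WithTop X) := hbT i hj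
      have hvbi : v = b i := hT.2 v (b i) (xs (i + 1)) hTv hTbi
      have hc := (hstep (i + 1) hj).1
      simp only [Nat.succ_ne_zero, if_false, Nat.add_sub_cancel] at hc
      rw [hvbi] at hv
      omega
  have cmpeq : ∀ j, j < m → ∀ v : ℕ × ℕ,
      coord (Bool.xor ε (par (xs j))) v = coord (Bool.xor ε (par (xs j))) (b j) →
      (cmpIns (!ε) (xs j) (T v) ↔ cmpIns ε (xs j) (T v)) := by
    intro j hj v hv
    exact cmpIns_not_iff (key j hj v hv)
  refine ⟨⟨?_, ?_⟩, ?_⟩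
  · -- transpose part: BumpSeq
    refine ⟨hbm, hx0, ?_, ?_, ?_⟩
    · intro j hj; simpa using hbT j hj
    · simpa using hbtop
    · intro j hj
      obtain ⟨h1, h2, h3⟩ := hstep j hj
      refine ⟨?_, ?_, ?_⟩
      · simp only [xor_not_left, coord_swap, Bool.not_not]
        exact h1
      · simpa using (cmpeq j hj (b j) rfl).mpr h2
      · intro v hv hc
        simp only [xor_not_left, coord_not, Prod.mk.eta, Bool.not_not] at hv hc ⊢
        have hv' : coord (Bool.xor ε (par (xs j))) (v.2, v.1) =
            coord (Bool.xor ε (par (xs j))) (b j) := hv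
        have := h3 (v.2, v.1) hv' ((cmpeq j hj (v.2, v.1) hv').mp hc)
        simpa [coord_not, Prod.mk.eta] using this
  · -- transpose part: InsResult
    intro R hR
    refine ⟨?_, ?_⟩
    · intro k hk; simpa using hR.1 k hk
    · intro u hu
      refine hR.2 (u.2, u.1) ?_
      intro k hk hne
      exact hu k hk (show u = ((b k).2, (b k).1) by rw [← hne])
  · -- dual part
    refine ⟨hbm, hx0, hbT, hbtop, ?_⟩
    intro j hj
    obtain ⟨h1, h2, h3⟩ := hstep j hj
    refine ⟨?_, ?_, ?_⟩
    · simpa only [xor_not_not] using h1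
    · exact (cmpeq j hj (b j) rfl).mpr h2
    · intro v hv hc
      simp only [xor_not_not] at hv hc ⊢
      exact h3 v hv ((cmpeq j hj v hv).mp hc)

end SuperRSK
end

section
/- (Bumped node filling lemma) Let b_1, ..., b_m be the bumped node sequence for the ε-insertion of x into a semistandard (X,λ)-tableau T, and δ ∈ Z/2. If i < j and the δ-coordinate of b_i is less than the δ-coordinate of b_j, then there is a sequence i ≤ t_0 < t_1 < ... < t_k < j with k = (b_j)_δ − (b_i)_δ − 1, such that (b_{t_a})_δ = (b_i)_δ + a and ε + parity(T(b_{t_a})) = δ for all a. -/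
namespace SuperRSK

variable {X Y : Type*}

/-- Bumped node filling lemma: if `i < j` and the `δ`-coordinate of `b i` is less than
that of `b j`, then there is an increasing sequence `i ≤ t 0 < ⋯ < t k < j`, with
`k = (b j)_δ − (b i)_δ − 1`, such that `(b (t a))_δ = (b i)_δ + a` and the entry bumped
at `b (t a)` (namely `xs (t a + 1)`) has `ε + parity = δ`, for all `a ≤ k`. -/
theorem stmt13 [LinearOrder X] (ε δ : Bool) (par : X → Bool) (T : ℕ × ℕ → WithTop X)
    (x : X) (b : ℕ → ℕ × ℕ) (xs : ℕ → X) (m : ℕ)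
    (hT : IsSStd par T) (hb : BumpSeq ε par T x b xs m)
    (i j : ℕ) (hij : i < j) (hj : j < m)
    (hlt : coord δ (b i) < coord δ (b j)) :
    ∃ t : ℕ → ℕ,
      i ≤ t 0 ∧
      (∀ a, a < coord δ (b j) - coord δ (b i) - 1 → t a < t (a + 1)) ∧
      t (coord δ (b j) - coord δ (b i) - 1) < j ∧
      ∀ a, a ≤ coord δ (b j) - coord δ (b i) - 1 →
        coord δ (b (t a)) = coord δ (b i) + a ∧
        Bool.xor ε (par (xs (t a + 1))) = δ := by
  classical
  obtain ⟨hm, hx0, hTb, hTop, hstep⟩ := hb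
  -- Key step lemma: the δ-coordinate increases by exactly 1 at a δ-direction step,
  -- and does not increase at a (!δ)-direction step.
  have key : ∀ s, s + 1 < m →
      (Bool.xor ε (par (xs (s+1))) = δ → coord δ (b (s+1)) = coord δ (b s) + 1) ∧
      (Bool.xor ε (par (xs (s+1))) = !δ → coord δ (b (s+1)) ≤ coord δ (b s)) := by
    intro s hs
    obtain ⟨h1, _, h3⟩ := hstep (s+1) hs
    rw [if_neg (Nat.succ_ne_zero s)] at h1
    simp only [Nat.add_sub_cancel] at h1
    have hTbs : T (b s) = (xs (s+1) : WithTop X) := hTb s hs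
    refine ⟨fun hd => by rw [hd] at h1; exact h1, fun hd => ?_⟩
    obtain ⟨v, hv1, hv2, hle1, hle2, hpc⟩ :
        ∃ v : ℕ × ℕ, coord (!δ) v = coord (!δ) (b s) + 1 ∧ coord δ v = coord δ (b s) ∧
          (b s).1 ≤ v.1 ∧ (b s).2 ≤ v.2 ∧
          (∀ a : X, T (b s) = (a : WithTop X) → T v = (a : WithTop X) → par a = δ) := by
      cases δ
      · exact ⟨((b s).1, (b s).2 + 1), by simp [coord], by simp [coord], le_refl _, by simp,
          fun a hba hva => hT.2.1 (b s) ((b s).1, (b s).2 + 1) a rfl (lt_add_one _) hba hva⟩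
      · exact ⟨((b s).1 + 1, (b s).2), by simp [coord], by simp [coord], by simp, le_refl _,
          fun a hba hva => hT.2.2 (b s) ((b s).1 + 1, (b s).2) a rfl (lt_add_one _) hba hva⟩
    have hmono : T (b s) ≤ T v := hT.1 _ _ hle1 hle2
    have hcmp : cmpIns ε (xs (s+1)) (T v) := by
      cases hε : ε
      · simp only [cmpIns, if_false, Bool.false_eq_true]
        refine lt_of_le_of_ne (hTbs ▸ hmono) fun heq => ?_
        have hpa := hpc (xs (s+1)) hTbs heq.symm
        rw [hε] at hd
        simp only [Bool.false_xor] at hd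
        rw [hpa] at hd
        cases δ <;> simp at hd
      · simp only [cmpIns, if_true]
        exact hTbs ▸ hmono
    rw [hd] at h1
    have hvd : coord (Bool.xor ε (par (xs (s+1)))) v =
        coord (Bool.xor ε (par (xs (s+1)))) (b (s+1)) := by
      rw [hd, hv1, h1]
    have hfin := h3 v hvd hcmp
    rw [hd] at hfin
    simp only [Bool.not_not] at hfin
    rw [hv2] at hfin
    exact hfin
  set K := coord δ (b j) - coord δ (b i) - 1 with hK
  have hcj : coord δ (b j) = coord δ (b i) + K + 1 := by omega
  set S : ℕ → Finset ℕ :=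
    fun a => (Finset.Ico i j).filter (fun s => coord δ (b s) ≤ coord δ (b i) + a) with hS
  have hne : ∀ a, (S a).Nonempty := by
    intro a
    refine ⟨i, ?_⟩
    simp only [hS, Finset.mem_filter, Finset.mem_Ico]
    exact ⟨⟨le_refl _, hij⟩, Nat.le_add_right _ _⟩
  have hprop : ∀ a, i ≤ (S a).max' (hne a) ∧ (S a).max' (hne a) < j ∧
      coord δ (b ((S a).max' (hne a))) ≤ coord δ (b i) + a := by
    intro a
    have := Finset.max'_mem (S a) (hne a)
    simp only [hS, Finset.mem_filter, Finset.mem_Ico] at this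
    exact ⟨this.1.1, this.1.2, this.2⟩
  have hmax : ∀ a s, i ≤ s → s < j → coord δ (b s) ≤ coord δ (b i) + a →
      s ≤ (S a).max' (hne a) := by
    intro a s h1 h2 h3
    refine Finset.le_max' _ s ?_
    simp only [hS, Finset.mem_filter, Finset.mem_Ico]
    exact ⟨⟨h1, h2⟩, h3⟩
  have hgt : ∀ a, a ≤ K → coord δ (b i) + a < coord δ (b ((S a).max' (hne a) + 1)) := by
    intro a ha
    obtain ⟨hs1, hs2, hs3⟩ := hprop a
    have h4 : (S a).max' (hne a) + 1 ≤ j := hs2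
    rcases eq_or_lt_of_le h4 with heq | hlt'
    · rw [heq, hcj]; omega
    · by_contra hcon
      push_neg at hcon
      have := hmax a ((S a).max' (hne a) + 1) (by omega) hlt' hcon
      omega
  have hdir : ∀ a, a ≤ K → coord δ (b ((S a).max' (hne a))) = coord δ (b i) + a ∧
      Bool.xor ε (par (xs ((S a).max' (hne a) + 1))) = δ := by
    intro a ha
    obtain ⟨hs1, hs2, hs3⟩ := hprop a
    have hsm : (S a).max' (hne a) + 1 < m := by omega
    by_cases hd : Bool.xor ε (par (xs ((S a).max' (hne a) + 1))) = δ
    · have hkey := (key _ hsm).1 hd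
      have := hgt a ha
      exact ⟨by omega, hd⟩
    · have hd' : Bool.xor ε (par (xs ((S a).max' (hne a) + 1))) = !δ := by
        revert hd
        cases Bool.xor ε (par (xs ((S a).max' (hne a) + 1))) <;> cases δ <;> simp
      have hkey := (key _ hsm).2 hd'
      have := hgt a ha
      omega
  refine ⟨fun a => (S a).max' (hne a), (hprop 0).1, ?_, (hprop K).2.1, fun a ha => hdir a ha⟩
  intro a ha
  show (S a).max' (hne a) < (S (a + 1)).max' (hne (a + 1))
  obtain ⟨hc, hd⟩ := hdir a (le_of_lt ha)
  have hsm : (S a).max' (hne a) + 1 < m := by have := (hprop a).2.1; omega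
  have hc1 : coord δ (b ((S a).max' (hne a) + 1)) = coord δ (b i) + a + 1 := by
    rw [(key _ hsm).1 hd, hc]
  have hj' : (S a).max' (hne a) + 1 < j := by
    have h4 : (S a).max' (hne a) + 1 ≤ j := (hprop a).2.1
    rcases eq_or_lt_of_le h4 with heq | hlt'
    · rw [heq] at hc1; omega
    · exact hlt'
  have := hmax (a+1) ((S a).max' (hne a) + 1) (by have := (hprop a).1; omega) hj' (by omega)
  omega

end SuperRSK
end
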